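/- Let q be a prime with q ≡ 1 (mod 4). Then there exist integers α and β with α^2 + β^2 = q such that the elliptic curve y^2 = x^3 - x over the field with q elements has exactly q + 1 - 2α projective points; equivalently, its trace of Frobenius a_q equals 2α where α^2 + β^2 = q. -/

import Mathlib

open Finset

section JacobsthalSums

variable {F : Type*} [Field F] [Fintype F] [DecidableEq F]

local notation "χ" => quadraticChar F

/-- The Jacobsthal-type character sum `∑ x, χ(x³ + n·x)`. -/
def jf (F : Type*) [Field F] [Fintype F] [DecidableEq F] (n : F) : ℤ :=
  ∑ x : F, quadraticChar F (x ^ 3 + n * x)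

lemma jf_scale {t : F} (ht : t ≠ 0) (n : F) : jf F (t ^ 2 * n) = χ t * jf F n := by
  unfold jf
  rw [Finset.mul_sum]
  symm
  refine Fintype.sum_equiv (Equiv.mulLeft₀ t ht) _ _ fun y => ?_
  have h : (t * y) ^ 3 + t ^ 2 * n * (t * y) = t ^ 3 * (y ^ 3 + n * y) := by ring
  have h3 : χ t ^ 3 = χ t := by rw [pow_succ, quadraticChar_sq_one ht, one_mul]
  rw [Equiv.mulLeft₀_apply, h, map_mul, map_pow, h3]

lemma jf_zero (hF : ringChar F ≠ 2) : jf F 0 = 0 := by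
  unfold jf
  have h : ∀ x : F, χ (x ^ 3 + 0 * x) = χ x := by
    intro x
    by_cases hx : x = 0
    · simp [hx]
    · rw [zero_mul, add_zero, pow_succ, map_mul, quadraticChar_sq_one' hx, one_mul]
  rw [Finset.sum_congr rfl fun x _ => h x, quadraticChar_sum_zero hF]

lemma jf_even (hF : ringChar F ≠ 2) {n : F} (hn : n ≠ 0) : 2 ∣ jf F n := by
  have hodd : Fintype.card F % 2 = 1 := FiniteField.odd_card_of_char_ne_two hF
  rw [show (2:ℤ) = ((2:ℕ):ℤ) by norm_num, ← ZMod.intCast_zmod_eq_zero_iff_dvd]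
  unfold jf
  push_cast
  have hterm : ∀ x : F, ((χ (x ^ 3 + n * x) : ℤ) : ZMod 2)
      = if x ^ 3 + n * x = 0 then 0 else 1 := by
    intro x
    by_cases h : x ^ 3 + n * x = 0
    · simp [h]
    · rcases quadraticChar_dichotomy h with h1 | h1 <;> simp [h, h1] <;> decide
  rw [Finset.sum_congr rfl fun x _ => hterm x, Finset.sum_ite, Finset.sum_const_zero,
    Finset.sum_const, zero_add, nsmul_eq_mul, mul_one]
  have hroots : Finset.univ.filter (fun x : F => x ^ 3 + n * x = 0)
      = insert (0 : F) {x : F | x ^ 2 = -n}.toFinset := by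
    ext x
    simp only [Finset.mem_filter, Finset.mem_univ, true_and, Finset.mem_insert,
      Set.mem_toFinset, Set.mem_setOf_eq]
    constructor
    · intro h
      have : x * (x ^ 2 + n) = 0 := by linear_combination h
      rcases mul_eq_zero.mp this with h' | h'
      · exact Or.inl h'
      · exact Or.inr (by linear_combination h')
    · rintro (rfl | h)
      · ring
      · linear_combination x * h
  have h0notmem : (0 : F) ∉ {x : F | x ^ 2 = -n}.toFinset := by
    simp only [Set.mem_toFinset, Set.mem_setOf_eq]
    intro h
    rw [zero_pow (by norm_num : (2:ℕ) ≠ 0), eq_comm, neg_eq_zero] at h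
    exact hn h
  have hcards : ({x : F | x ^ 2 = -n}.toFinset.card : ℤ) = χ (-n) + 1 :=
    quadraticChar_card_sqrts hF (-n)
  have hcardval : {x : F | x ^ 2 = -n}.toFinset.card = 2 ∨
      {x : F | x ^ 2 = -n}.toFinset.card = 0 := by
    rcases quadraticChar_dichotomy (neg_ne_zero.mpr hn) with h1 | h1
    · left
      have h2 : ({x : F | x ^ 2 = -n}.toFinset.card : ℤ) = 2 := by rw [h1] at hcards; linarith
      exact_mod_cast h2
    · right
      have h2 : ({x : F | x ^ 2 = -n}.toFinset.card : ℤ) = 0 := by rw [h1] at hcards; linarith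
      exact_mod_cast h2
  have hPcard : (Finset.univ.filter (fun x : F => x ^ 3 + n * x = 0)).card = 3 ∨
      (Finset.univ.filter (fun x : F => x ^ 3 + n * x = 0)).card = 1 := by
    rw [hroots, Finset.card_insert_of_notMem h0notmem]
    omega
  have hsplit : (Finset.univ.filter (fun x : F => ¬(x ^ 3 + n * x = 0))).card
      = Fintype.card F - (Finset.univ.filter (fun x : F => x ^ 3 + n * x = 0)).card := by
    have := Finset.card_filter_add_card_filter_not
      (s := (Finset.univ : Finset F)) (p := fun x : F => x ^ 3 + n * x = 0)
    rw [Finset.card_univ] at this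
    omega
  rw [hsplit]
  obtain ⟨k, hk⟩ : 2 ∣ (Fintype.card F
      - (Finset.univ.filter (fun x : F => x ^ 3 + n * x = 0)).card) := by omega
  rw [hk, Nat.cast_mul]
  have h20 : ((2:ℕ) : ZMod 2) = 0 := ZMod.natCast_self 2
  rw [h20, zero_mul]

lemma sum_shift (hF : ringChar F ≠ 2) {c : F} (hc : c ≠ 0) :
    ∑ m : F, χ (m * (m + c)) = -1 := by
  rw [← Finset.sum_erase (Finset.univ) (a := (0:F)) (by simp)]
  have key : ∀ m ∈ univ.erase (0:F), χ (m * (m + c)) = χ (1 + c * m⁻¹) := by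
    intro m hm
    have hm0 : m ≠ 0 := (Finset.mem_erase.mp hm).1
    have h : m * (m + c) = m ^ 2 * (1 + c * m⁻¹) := by field_simp
    rw [h, map_mul, quadraticChar_sq_one' hm0, one_mul]
  rw [Finset.sum_congr rfl key]
  have hbij : ∑ m ∈ univ.erase (0:F), χ (1 + c * m⁻¹) = ∑ z ∈ univ.erase (1:F), χ z := by
    refine Finset.sum_nbij' (fun m => 1 + c * m⁻¹) (fun z => c * (z - 1)⁻¹) ?_ ?_ ?_ ?_ ?_
    · intro m hm
      have hm0 : m ≠ 0 := (Finset.mem_erase.mp hm).1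
      simp only [Finset.mem_erase, Finset.mem_univ, and_true]
      intro h
      have : c * m⁻¹ = 0 := by linear_combination h
      simp [hm0, hc] at this
    · intro z hz
      have hz1 : z ≠ 1 := (Finset.mem_erase.mp hz).1
      simp only [Finset.mem_erase, Finset.mem_univ, and_true]
      exact mul_ne_zero hc (inv_ne_zero (sub_ne_zero.mpr hz1))
    · intro m hm
      have hm0 : m ≠ 0 := (Finset.mem_erase.mp hm).1
      field_simp
      simp [hc]
    · intro z hz
      have hz1 : z ≠ 1 := (Finset.mem_erase.mp hz).1
      have : z - 1 ≠ 0 := sub_ne_zero.mpr hz1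
      field_simp
      ring
    · intro m hm; rfl
  rw [hbij, Finset.sum_erase_eq_sub (Finset.mem_univ (1:F)), quadraticChar_sum_zero hF,
    map_one, zero_sub]

lemma sum_sq_char :
    ∑ m : F, (χ m) ^ 2 = (Fintype.card F : ℤ) - 1 := by
  rw [← Finset.sum_erase (Finset.univ) (a := (0:F)) (by simp)]
  rw [Finset.sum_congr rfl (fun m hm => quadraticChar_sq_one (Finset.mem_erase.mp hm).1)]
  rw [Finset.sum_const, Finset.card_erase_of_mem (Finset.mem_univ _), Finset.card_univ]
  have h1 : 1 ≤ Fintype.card F := Fintype.card_pos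
  simp only [nsmul_eq_mul, mul_one]
  omega

lemma sum_pair (hF : ringChar F ≠ 2) (a b : F) :
    ∑ n : F, χ ((n + a) * (n + b)) =
      if a = b then (Fintype.card F : ℤ) - 1 else -1 := by
  split_ifs with hab
  · subst hab
    rw [← sum_sq_char]
    symm
    refine Fintype.sum_equiv (Equiv.subRight a) _ _ fun m => ?_
    rw [Equiv.subRight_apply, sub_add_cancel, ← pow_two, map_pow]
  · have hc : b - a ≠ 0 := sub_ne_zero.mpr fun h => hab h.symm
    rw [← sum_shift hF hc]
    refine Fintype.sum_equiv (Equiv.addRight a) _ _ fun n => ?_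
    rw [Equiv.coe_addRight]
    ring_nf

lemma jf_sq_sum (hF : ringChar F ≠ 2) (h4 : IsSquare (-1 : F)) :
    ∑ n : F, (jf F n) ^ 2
      = 2 * (Fintype.card F : ℤ) * ((Fintype.card F : ℤ) - 1) := by
  have hchi0 : χ (0 : F) = 0 := MulChar.map_zero _
  have hneg1 : χ (-1 : F) = 1 :=
    (quadraticChar_one_iff_isSquare (neg_ne_zero.mpr one_ne_zero)).mpr h4
  have step1 : ∑ n : F, (jf F n) ^ 2
      = ∑ x : F, ∑ y : F, ∑ n : F, χ (x ^ 3 + n * x) * χ (y ^ 3 + n * y) := by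
    have : ∀ n : F, (jf F n) ^ 2
        = ∑ x : F, ∑ y : F, χ (x ^ 3 + n * x) * χ (y ^ 3 + n * y) := by
      intro n
      rw [pow_two, jf, Finset.sum_mul_sum]
    rw [Finset.sum_congr rfl fun n _ => this n, Finset.sum_comm]
    exact Finset.sum_congr rfl fun x _ => Finset.sum_comm
  have inner : ∀ x y : F, x ≠ 0 → y ≠ 0 →
      ∑ n : F, χ (x ^ 3 + n * x) * χ (y ^ 3 + n * y)
        = χ (x * y) * (if x ^ 2 = y ^ 2 then (Fintype.card F : ℤ) - 1 else -1) := by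
    intro x y hx hy
    have : ∀ n : F, χ (x ^ 3 + n * x) * χ (y ^ 3 + n * y)
        = χ (x * y) * χ ((n + x ^ 2) * (n + y ^ 2)) := by
      intro n
      rw [← map_mul, ← map_mul]
      congr 1
      ring
    rw [Finset.sum_congr rfl fun n _ => this n, ← Finset.mul_sum, sum_pair hF]
  rw [step1]
  set U := Finset.univ.erase (0 : F) with hU
  have hx0 : ∀ y : F, ∑ n : F, χ ((0:F) ^ 3 + n * 0) * χ (y ^ 3 + n * y) = 0 := by
    intro y
    refine Finset.sum_eq_zero fun n _ => ?_
    simp [hchi0]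
  have hy0 : ∀ x : F, ∑ n : F, χ (x ^ 3 + n * x) * χ ((0:F) ^ 3 + n * 0) = 0 := by
    intro x
    refine Finset.sum_eq_zero fun n _ => ?_
    simp [hchi0]
  rw [← Finset.sum_erase (Finset.univ) (a := (0:F))
    (Finset.sum_eq_zero fun y _ => hx0 y)]
  have hrow : ∀ x ∈ U, (∑ y : F, ∑ n : F, χ (x ^ 3 + n * x) * χ (y ^ 3 + n * y))
      = 2 * (Fintype.card F : ℤ) := by
    intro x hxU
    have hx : x ≠ 0 := (Finset.mem_erase.mp hxU).1
    rw [← Finset.sum_erase (Finset.univ) (a := (0:F)) (hy0 x)]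
    rw [Finset.sum_congr rfl fun y hyU => inner x y hx (Finset.mem_erase.mp hyU).1]
    have split : ∀ y : F, χ (x * y) * (if x ^ 2 = y ^ 2 then (Fintype.card F : ℤ) - 1 else -1)
        = (Fintype.card F : ℤ) * (if x ^ 2 = y ^ 2 then χ (x * y) else 0) - χ (x * y) := by
      intro y
      split_ifs <;> ring
    rw [Finset.sum_congr rfl fun y _ => split y, Finset.sum_sub_distrib, ← Finset.mul_sum]
    have hsum2 : ∑ y ∈ U, χ (x * y) = 0 := by
      have : ∑ y ∈ U, χ (x * y) = χ x * ∑ y ∈ U, χ y := by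
        rw [Finset.mul_sum]
        exact Finset.sum_congr rfl fun y _ => map_mul _ _ _
      rw [this, Finset.sum_erase (Finset.univ) hchi0, quadraticChar_sum_zero hF, mul_zero]
    have hxx : x ≠ -x := by
      intro h
      exact hx ((Ring.eq_self_iff_eq_zero_of_char_ne_two hF).mp h.symm)
    have hfil : U.filter (fun y => x ^ 2 = y ^ 2) = {x, -x} := by
      ext y
      simp only [hU, Finset.mem_filter, Finset.mem_erase, Finset.mem_univ, true_and,
        Finset.mem_insert, Finset.mem_singleton, and_true]
      constructor
      · rintro ⟨hy, h⟩
        rcases sq_eq_sq_iff_eq_or_eq_neg.mp h.symm with h' | h'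
        · exact Or.inl h'
        · exact Or.inr h'
      · rintro (rfl | rfl)
        · exact ⟨hx, rfl⟩
        · exact ⟨neg_ne_zero.mpr hx, by ring⟩
    have hsum1 : ∑ y ∈ U, (if x ^ 2 = y ^ 2 then χ (x * y) else 0) = 2 := by
      rw [← Finset.sum_filter, hfil, Finset.sum_insert (by simpa using hxx),
        Finset.sum_singleton]
      have h1 : χ (x * x) = 1 := by rw [← pow_two]; exact quadraticChar_sq_one' hx
      have h2 : χ (x * -x) = 1 := by
        have : x * -x = -1 * x ^ 2 := by ring
        rw [this, map_mul, hneg1, quadraticChar_sq_one' hx, mul_one]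
      rw [h1, h2]; norm_num
    rw [hsum1, hsum2]
    ring
  rw [Finset.sum_congr rfl hrow, Finset.sum_const,
    Finset.card_erase_of_mem (Finset.mem_univ _), Finset.card_univ]
  have h1 : 1 ≤ Fintype.card F := Fintype.card_pos
  simp only [nsmul_eq_mul]
  push_cast [Nat.cast_sub h1]
  ring

lemma jf_sq_class_sq {n : F} (hn : n ≠ 0) (h : IsSquare n) :
    (jf F n) ^ 2 = (jf F 1) ^ 2 := by
  obtain ⟨t, ht⟩ := h
  have ht0 : t ≠ 0 := by rintro rfl; rw [mul_zero] at ht; exact hn ht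
  have h1 : n = t ^ 2 * 1 := by rw [ht]; ring
  rw [h1, jf_scale ht0, mul_pow, quadraticChar_sq_one ht0, one_mul]

lemma jf_sq_add (hF : ringChar F ≠ 2) (h4 : IsSquare (-1 : F)) {s : F}
    (hs : ¬ IsSquare s) :
    (jf F 1) ^ 2 + (jf F s) ^ 2 = 4 * (Fintype.card F : ℤ) := by
  have hs0 : s ≠ 0 := by rintro rfl; exact hs ⟨0, (mul_zero 0).symm⟩
  have hchi_s : χ s = -1 := quadraticChar_neg_one_iff_not_isSquare.mpr hs
  have hclass : ∀ n : F, n ≠ 0 →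
      (jf F n) ^ 2 + (jf F (s * n)) ^ 2 = (jf F 1) ^ 2 + (jf F s) ^ 2 := by
    intro n hn
    by_cases h : IsSquare n
    · rw [jf_sq_class_sq hn h]
      obtain ⟨t, ht⟩ := h
      have ht0 : t ≠ 0 := by rintro rfl; rw [mul_zero] at ht; exact hn ht
      have h2 : s * n = t ^ 2 * s := by rw [ht]; ring
      rw [h2, jf_scale ht0, mul_pow, quadraticChar_sq_one ht0, one_mul]
    · have hchi_n : χ n = -1 := quadraticChar_neg_one_iff_not_isSquare.mpr h
      have hns : n * s⁻¹ ≠ 0 := mul_ne_zero hn (inv_ne_zero hs0)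
      have hq1 : χ (n * s⁻¹) = 1 := by
        have hmul : χ (n * s⁻¹) * χ s = χ n := by
          rw [← map_mul]; congr 1; field_simp
        rw [hchi_s, hchi_n] at hmul
        linarith
      obtain ⟨t, ht⟩ := (quadraticChar_one_iff_isSquare hns).mp hq1
      have ht0 : t ≠ 0 := by rintro rfl; rw [mul_zero] at ht; exact hns ht
      have h1 : n = t ^ 2 * s := by
        field_simp at ht
        rw [ht]; ring
      have h2 : s * n = (s * t) ^ 2 * 1 := by rw [h1]; field_simp
      rw [h2, h1, jf_scale ht0, jf_scale (mul_ne_zero hs0 ht0), mul_pow, mul_pow,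
        quadraticChar_sq_one ht0, quadraticChar_sq_one (mul_ne_zero hs0 ht0),
        one_mul, one_mul, add_comm]
  have e1 : ∑ n ∈ Finset.univ.erase (0:F), (jf F n) ^ 2
      = 2 * (Fintype.card F : ℤ) * ((Fintype.card F : ℤ) - 1) := by
    rw [Finset.sum_erase _ (by rw [jf_zero hF]; ring)]
    exact jf_sq_sum hF h4
  have e2 : ∑ n ∈ Finset.univ.erase (0:F), (jf F (s * n)) ^ 2
      = 2 * (Fintype.card F : ℤ) * ((Fintype.card F : ℤ) - 1) := by
    rw [← e1]
    refine Finset.sum_nbij' (fun n => s * n) (fun m => s⁻¹ * m) ?_ ?_ ?_ ?_ ?_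
    · intro a ha
      simp only [Finset.mem_erase, Finset.mem_univ, and_true] at ha ⊢
      exact mul_ne_zero hs0 ha
    · intro a ha
      simp only [Finset.mem_erase, Finset.mem_univ, and_true] at ha ⊢
      exact mul_ne_zero (inv_ne_zero hs0) ha
    · intro a _; field_simp
    · intro a _; field_simp
    · intro a _; rfl
  have hsum : ∑ n ∈ Finset.univ.erase (0:F), ((jf F n) ^ 2 + (jf F (s * n)) ^ 2)
      = ((Fintype.card F - 1 : ℕ) : ℤ) * ((jf F 1) ^ 2 + (jf F s) ^ 2) := by
    rw [Finset.sum_congr rfl fun n hn => hclass n (Finset.mem_erase.mp hn).1,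
      Finset.sum_const, Finset.card_erase_of_mem (Finset.mem_univ _), Finset.card_univ,
      nsmul_eq_mul]
  rw [Finset.sum_add_distrib, e1, e2] at hsum
  have hcard1 : 1 < Fintype.card F := Fintype.one_lt_card
  have hcast : ((Fintype.card F - 1 : ℕ) : ℤ) = (Fintype.card F : ℤ) - 1 := by
    push_cast [Nat.cast_sub hcard1.le]; ring
  rw [hcast] at hsum
  have hne : (Fintype.card F : ℤ) - 1 ≠ 0 := by
    have : (1:ℤ) < (Fintype.card F : ℤ) := by exact_mod_cast hcard1
    linarith
  apply mul_left_cancel₀ hne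
  rw [← hsum]
  ring

lemma count_points (hF : ringChar F ≠ 2) :
    (Nat.card {P : F × F // P.2 ^ 2 = P.1 ^ 3 - P.1} : ℤ)
      = (Fintype.card F : ℤ) + jf F (-1) := by
  have e : {P : F × F // P.2 ^ 2 = P.1 ^ 3 - P.1} ≃ Σ x : F, {y : F // y ^ 2 = x ^ 3 - x} :=
    { toFun := fun P => ⟨P.1.1, P.1.2, P.2⟩
      invFun := fun s => ⟨(s.1, s.2.1), s.2.2⟩
      left_inv := fun ⟨⟨x, y⟩, h⟩ => rfl
      right_inv := fun ⟨x, y, h⟩ => rfl }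
  rw [Nat.card_eq_fintype_card, Fintype.card_congr e, Fintype.card_sigma]
  have hfib : ∀ x : F, (Fintype.card {y : F // y ^ 2 = x ^ 3 - x} : ℤ)
      = χ (x ^ 3 - x) + 1 := by
    intro x
    rw [← quadraticChar_card_sqrts hF (x ^ 3 - x)]
    congr 1
    rw [Set.toFinset_card]
    exact Fintype.card_congr (Equiv.subtypeEquivRight fun y => Iff.rfl)
  push_cast
  rw [Finset.sum_congr rfl fun x _ => hfib x, Finset.sum_add_distrib,
    Finset.sum_const, Finset.card_univ, nsmul_eq_mul, mul_one]
  have harg : ∀ x : F, χ (x ^ 3 - x) = χ (x ^ 3 + (-1) * x) := by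
    intro x; congr 1; ring
  rw [Finset.sum_congr rfl fun x _ => harg x]
  unfold jf
  ring

end JacobsthalSums

theorem point_count_y2_eq_x3_sub_x_one_mod_four (q : ℕ) (hq : q.Prime)
    (hq4 : q % 4 = 1) :
    ∃ α β : ℤ, α ^ 2 + β ^ 2 = (q : ℤ) ∧
      (Nat.card {P : ZMod q × ZMod q // P.2 ^ 2 = P.1 ^ 3 - P.1} : ℤ) + 1
        = (q : ℤ) + 1 - 2 * α := by
  haveI : Fact q.Prime := ⟨hq⟩
  haveI : Fact (1 < q) := ⟨hq.one_lt⟩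
  have hF : ringChar (ZMod q) ≠ 2 := by
    rw [ZMod.ringChar_zmod_n]
    omega
  have h4 : IsSquare (-1 : ZMod q) := by
    rw [ZMod.exists_sq_eq_neg_one_iff]
    omega
  have hcard : Fintype.card (ZMod q) = q := ZMod.card q
  obtain ⟨s, hs⟩ := FiniteField.exists_nonsquare hF
  have hs0 : s ≠ 0 := by rintro rfl; exact hs ⟨0, (mul_zero 0).symm⟩
  have hn1 : (-1 : ZMod q) ≠ 0 := neg_ne_zero.mpr one_ne_zero
  obtain ⟨a, ha⟩ := jf_even hF hn1
  obtain ⟨b, hb⟩ := jf_even hF hs0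
  have hsq : (jf (ZMod q) (-1)) ^ 2 = (jf (ZMod q) 1) ^ 2 := jf_sq_class_sq hn1 h4
  have hAB := jf_sq_add hF h4 hs
  rw [hcard] at hAB
  refine ⟨-a, b, ?_, ?_⟩
  · have key : (2 * a) ^ 2 + (2 * b) ^ 2 = 4 * (q : ℤ) := by
      rw [← ha, ← hb, hsq, hAB]
    have h4q : (4:ℤ) * ((-a) ^ 2 + b ^ 2) = 4 * (q : ℤ) := by linear_combination key
    exact mul_left_cancel₀ (by norm_num) h4q
  · rw [count_points hF, hcard, ha]
    ring
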